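/- Let E be a real inner product space, Ω ⊆ E an open convex set, and φ : Ω → ℝ a differentiable strictly convex function with gradient ∇φ. Let Z be a random variable taking values in a set 𝒵, let T : 𝒵 → Ω be a measurable map that is injective, and assume T(𝒵) is convex, T(Z) and φ(T(Z)) are integrable, and E[T(Z)] ∈ T(𝒵) ∩ Ω. Then the in-space Bayes act for the pullback loss exists, is unique, and equals b* = T⁻¹(E[T(Z)]): for every b ∈ 𝒵, E[D_φ(T(Z), T(b))] ≥ E[D_φ(T(Z), T(b*))], with equality iff T(b) = E[T(Z)]. -/

import Mathlib

open MeasureTheory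
open scoped RealInnerProductSpace

/-- The Bregman divergence of `φ` with gradient field `g`:
`D_φ(x, y) = φ x − φ y − ⟪∇φ(y), x − y⟫`. -/
noncomputable def bregman {E : Type*} [NormedAddCommGroup E] [InnerProductSpace ℝ E]
    (φ : E → ℝ) (g : E → E) (x y : E) : ℝ :=
  φ x - φ y - ⟪g y, x - y⟫

lemma bregman_self_eq_zero {E : Type*} [NormedAddCommGroup E] [InnerProductSpace ℝ E]
    (φ : E → ℝ) (g : E → E) (x : E) : bregman φ g x x = 0 := by
  simp [bregman]

lemma bregman_pos {E : Type*} [NormedAddCommGroup E] [InnerProductSpace ℝ E]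
    [CompleteSpace E] {Ω : Set E} {φ : E → ℝ} {g : E → E}
    (hφ : StrictConvexOn ℝ Ω φ) {x y : E}
    (hgy : HasGradientAt φ (g y) y)
    (hx : x ∈ Ω) (hy : y ∈ Ω) (hxy : x ≠ y) : 0 < bregman φ g x y := by
  set L : ℝ → E := fun t => y + t • (x - y) with hL
  have hseg : ∀ t ∈ Set.Icc (0 : ℝ) 1, L t ∈ Ω := by
    intro t ht
    have : L t = (1 - t) • y + t • x := by
      simp only [hL]; module
    rw [this]
    exact hφ.1 hy hx (by linarith [ht.2]) ht.1 (by ring)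
  have hLinj : Function.Injective L := by
    intro a b hab
    simp only [hL] at hab
    have h1 : (a - b) • (x - y) = 0 := by
      have := sub_eq_zero.mpr hab
      rw [show y + a • (x - y) - (y + b • (x - y)) = (a - b) • (x - y) by module] at this
      exact this
    rcases smul_eq_zero.mp h1 with h | h
    · linarith [sub_eq_zero.mp h]
    · exact absurd (sub_eq_zero.mp h) hxy
  have hh : StrictConvexOn ℝ (Set.Icc (0 : ℝ) 1) (φ ∘ L) := by
    refine ⟨convex_Icc 0 1, ?_⟩
    intro a ha b hb hab w v hw hv hwv
    have hkey : L (w * a + v * b) = w • L a + v • L b := by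
      simp only [hL]
      have : y = (w + v) • y := by rw [hwv, one_smul]
      rw [show y + (w * a + v * b) • (x - y)
          = (w + v) • y + (w * a + v * b) • (x - y) by rw [← this]]
      module
    calc (φ ∘ L) (w * a + v * b) = φ (w • L a + v • L b) := by rw [Function.comp, hkey]
      _ < w • φ (L a) + v • φ (L b) :=
        hφ.2 (hseg a ha) (hseg b hb) (fun h => hab (hLinj h)) hw hv hwv
      _ = w • (φ ∘ L) a + v • (φ ∘ L) b := rfl
  have hLd : HasDerivAt L (x - y) 0 := by
    have : HasDerivAt (fun t : ℝ => t • (x - y)) ((1 : ℝ) • (x - y)) 0 :=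
      (hasDerivAt_id (0 : ℝ)).smul_const (x - y)
    have h2 := this.const_add y
    rw [one_smul] at h2
    exact h2
  have hL0 : L 0 = y := by simp [hL]
  have hd : HasDerivAt (φ ∘ L) ⟪g y, x - y⟫ 0 := by
    have hgy' := hgy.hasFDerivAt
    rw [← hL0] at hgy'
    have := hgy'.comp_hasDerivAt 0 hLd
    simpa [hL0] using this
  have := hh.lt_slope_of_hasDerivAt (by norm_num) (by norm_num)
    (by norm_num : (0:ℝ) < 1) hd
  have hslope : slope (φ ∘ L) 0 1 = φ x - φ y := by
    simp [slope, hL]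
  rw [hslope] at this
  simp only [bregman]
  linarith

/-- For an injective measurable transformation `T` with convex image, the
in-space Bayes act for the pullback Bregman loss exists, is unique, and equals
`b* = T⁻¹(E[T(Z)])`. -/
theorem inspace_bayes_act_pullback_bregman
    {E : Type*} [NormedAddCommGroup E] [InnerProductSpace ℝ E] [CompleteSpace E]
    [MeasurableSpace E]
    (Ω : Set E) (hΩo : IsOpen Ω) (hΩc : Convex ℝ Ω)
    (φ : E → ℝ) (g : E → E)
    (hφ : StrictConvexOn ℝ Ω φ)
    (hg : ∀ y ∈ Ω, HasGradientAt φ (g y) y)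
    {ζ : Type*} [MeasurableSpace ζ]
    {α : Type*} [MeasurableSpace α] (P : Measure α) [IsProbabilityMeasure P]
    (Z : α → ζ) (hZmeas : Measurable Z)
    (T : ζ → E) (hTmeas : Measurable T) (hTinj : Function.Injective T)
    (hTΩ : ∀ z, T z ∈ Ω) (hTrange : Convex ℝ (Set.range T))
    (hTZ : Integrable (fun ω => T (Z ω)) P)
    (hφTZ : Integrable (fun ω => φ (T (Z ω))) P)
    (hmean : (∫ ω, T (Z ω) ∂P) ∈ Set.range T ∩ Ω) :
    ∃ bstar : ζ, T bstar = (∫ ω, T (Z ω) ∂P) ∧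
      (∀ b : ζ, (∫ ω, bregman φ g (T (Z ω)) (T bstar) ∂P)
        ≤ ∫ ω, bregman φ g (T (Z ω)) (T b) ∂P) ∧
      (∀ b : ζ, (∫ ω, bregman φ g (T (Z ω)) (T b) ∂P)
          = (∫ ω, bregman φ g (T (Z ω)) (T bstar) ∂P) ↔ T b = ∫ ω, T (Z ω) ∂P) ∧
      (∀ b : ζ, (∫ ω, bregman φ g (T (Z ω)) (T b) ∂P)
          = (∫ ω, bregman φ g (T (Z ω)) (T bstar) ∂P) → b = bstar) := by
  set μ : E := ∫ ω, T (Z ω) ∂P with hμ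
  obtain ⟨bstar, hbstar⟩ := hmean.1
  have hμΩ : μ ∈ Ω := hmean.2
  -- key integral formula
  have key : ∀ y : E, (∫ ω, bregman φ g (T (Z ω)) y ∂P)
      = (∫ ω, φ (T (Z ω)) ∂P) - φ y - ⟪g y, μ - y⟫ := by
    intro y
    have hsub : Integrable (fun ω => T (Z ω) - y) P := hTZ.sub (integrable_const y)
    have hin : Integrable (fun ω => ⟪g y, T (Z ω) - y⟫) P := hsub.const_inner (g y)
    have hint2 : Integrable (fun ω => φ y + ⟪g y, T (Z ω) - y⟫) P :=
      (integrable_const (φ y)).add hin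
    have h1 : (∫ ω, bregman φ g (T (Z ω)) y ∂P)
        = (∫ ω, φ (T (Z ω)) ∂P) - ∫ ω, (φ y + ⟪g y, T (Z ω) - y⟫) ∂P := by
      rw [← integral_sub hφTZ hint2]
      congr 1; ext ω; simp [bregman]; ring
    rw [h1, integral_add (integrable_const (φ y)) hin,
      integral_const, integral_inner hsub,
      integral_sub hTZ (integrable_const y), integral_const]
    simp [← hμ]
    ring
  have hdiff : ∀ b : ζ, (∫ ω, bregman φ g (T (Z ω)) (T b) ∂P)
      - (∫ ω, bregman φ g (T (Z ω)) (T bstar) ∂P) = bregman φ g μ (T b) := by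
    intro b
    rw [key (T b), key (T bstar), hbstar]
    simp [bregman]
    ring
  have hnonneg : ∀ b : ζ, 0 ≤ bregman φ g μ (T b) := by
    intro b
    rcases eq_or_ne (T b) μ with h | h
    · rw [h, bregman_self_eq_zero]
    · exact le_of_lt (bregman_pos hφ (hg (T b) (hTΩ b)) hμΩ (hTΩ b) (Ne.symm h))
  refine ⟨bstar, hbstar, fun b => by linarith [hdiff b, hnonneg b], fun b => ?_, fun b hb => ?_⟩
  · constructor
    · intro h
      have h0 : bregman φ g μ (T b) = 0 := by rw [← hdiff b, h]; ring
      by_contra hne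
      have := bregman_pos hφ (hg (T b) (hTΩ b)) hμΩ (hTΩ b) (Ne.symm hne)
      linarith
    · intro h
      have : bregman φ g μ (T b) = 0 := by rw [h, bregman_self_eq_zero]
      linarith [hdiff b]
  · have : T b = μ := by
      have h0 : bregman φ g μ (T b) = 0 := by rw [← hdiff b, hb]; ring
      by_contra hne
      have := bregman_pos hφ (hg (T b) (hTΩ b)) hμΩ (hTΩ b) (Ne.symm hne)
      linarith
    exact hTinj (this.trans hbstar.symm)
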